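/- arXiv:2412.11853 — 3 statements merged into one kernel-verified Lean document; each statement's English description precedes it below -/
import Mathlib

section
/- For every prime p, the matrices β4r^p((σ1σ2σ1)²) and β4r^p((σ3σ2σ3)²) in GL(3, 𝔽p[t,t⁻¹]) generate a free group of rank 2; that is, the group homomorphism from the free group on two generators x, y to GL(3, 𝔽p[t,t⁻¹]) sending x ↦ β4r^p((σ1σ2σ1)²) and y ↦ β4r^p((σ3σ2σ3)²) is injective. -/
open Matrix LaurentPolynomial

noncomputable section

/-- The braid relations for the braid group `B₄` on three generators
`σ1 = 0`, `σ2 = 1`, `σ3 = 2`. -/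
def braidRels3 : Set (FreeGroup (Fin 3)) :=
  { FreeGroup.of 0 * FreeGroup.of 1 * FreeGroup.of 0 *
      (FreeGroup.of 1 * FreeGroup.of 0 * FreeGroup.of 1)⁻¹,
    FreeGroup.of 1 * FreeGroup.of 2 * FreeGroup.of 1 *
      (FreeGroup.of 2 * FreeGroup.of 1 * FreeGroup.of 2)⁻¹,
    FreeGroup.of 0 * FreeGroup.of 2 * (FreeGroup.of 2 * FreeGroup.of 0)⁻¹ }

/-- The braid group on 4 strands, presented by generators and relations. -/
abbrev B4 : Type := PresentedGroup braidRels3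

/-- The standard generators of `B₄`. -/
def σ (i : Fin 3) : B4 := PresentedGroup.of i

/-- The matrices of the reduced Burau representation of `B₄` on the generators,
over the Laurent polynomial ring `R[t,t⁻¹]`. -/
def burau4r (R : Type) [CommRing R] : Fin 3 → Matrix (Fin 3) (Fin 3) (LaurentPolynomial R)
  | 0 => !![-T 1, 1, 0; 0, 1, 0; 0, 0, 1]
  | 1 => !![1, 0, 0; T 1, -T 1, 1; 0, 0, 1]
  | 2 => !![1, 0, 0; 0, 1, 0; 0, T 1, -T 1]

/-- The braid `b1 = σ1 σ3⁻¹`. -/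
def b1 : B4 := σ 0 * (σ 2)⁻¹

/-- The braid `b2 = σ1 σ2 σ3 σ1⁻¹ σ2⁻¹ σ1⁻¹`. -/
def b2 : B4 := σ 0 * σ 1 * σ 2 * (σ 0)⁻¹ * (σ 1)⁻¹ * (σ 0)⁻¹

section Aux

open AddMonoidAlgebra Pointwise

variable {K : Type} [Field K]

/-- Degree of a Laurent polynomial. -/
def ldeg (f : LaurentPolynomial K) : WithBot ℤ :=
  AddMonoidAlgebra.supDegree (fun n : ℤ => (n : WithBot ℤ)) f

lemma ldeg_zero : ldeg (0 : LaurentPolynomial K) = ⊥ := supDegree_zero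

lemma ldeg_ne_bot {f : LaurentPolynomial K} (hf : f ≠ 0) : ldeg f ≠ ⊥ := by
  obtain ⟨n, hn⟩ := Finsupp.ne_iff.mp (mt AddMonoidAlgebra.coeff_eq_zero.mp hf)
  have hn' : n ∈ f.coeff.support := Finsupp.mem_support_iff.mpr (by simpa using hn)
  have : (n : WithBot ℤ) ≤ ldeg f := Finset.le_sup (f := fun n : ℤ => (n : WithBot ℤ)) hn'
  intro h; rw [h, le_bot_iff] at this; exact (WithBot.coe_ne_bot) this

lemma ldeg_exists {f : LaurentPolynomial K} (hf : f ≠ 0) : ∃ m : ℤ, ldeg f = m := by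
  obtain ⟨m, hm⟩ := WithBot.ne_bot_iff_exists.mp (ldeg_ne_bot hf)
  exact ⟨m, hm.symm⟩

lemma ne_zero_of_ldeg {f : LaurentPolynomial K} {m : ℤ} (h : ldeg f = m) : f ≠ 0 := by
  intro h0; rw [h0, ldeg_zero] at h; exact WithBot.bot_ne_coe h

lemma T_mul_apply (n : ℤ) (f : LaurentPolynomial K) (y : ℤ) :
    (T n * f : LaurentPolynomial K).coeff y = f.coeff (y - n) := by
  have : (T n * f : LaurentPolynomial K).coeff y
      = (AddMonoidAlgebra.single n (1:K) * f).coeff y := rfl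
  rw [this, AddMonoidAlgebra.coeff_single_mul_apply, one_mul]
  congr 1
  abel

lemma ldeg_T_mul (n : ℤ) (f : LaurentPolynomial K) : ldeg (T n * f) = n + ldeg f := by
  classical
  have hsupp : (T n * f : LaurentPolynomial K).coeff.support
      = f.coeff.support.map (Equiv.addLeft n).toEmbedding := by
    ext y
    simp only [Finsupp.mem_support_iff, Finset.mem_map, Equiv.coe_toEmbedding]
    rw [T_mul_apply]
    constructor
    · intro h
      exact ⟨y - n, h, by simp [Equiv.addLeft]⟩
    · rintro ⟨x, hx, rfl⟩
      simpa [Equiv.addLeft] using hx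
  rw [ldeg, supDegree, hsupp, Finset.sup_map]
  have hdist : ∀ a b : WithBot ℤ,
      (n : WithBot ℤ) + (a ⊔ b) = ((n : WithBot ℤ) + a) ⊔ ((n : WithBot ℤ) + b) := by
    intro a b
    rcases le_total a b with h | h
    · rw [sup_eq_right.mpr h, sup_eq_right.mpr (by exact add_le_add_right h _)]
    · rw [sup_eq_left.mpr h, sup_eq_left.mpr (by exact add_le_add_right h _)]
  have := Finset.comp_sup_eq_sup_comp (s := f.coeff.support)
    (g := fun b : WithBot ℤ => (n : WithBot ℤ) + b) (f := fun m : ℤ => (m : WithBot ℤ))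
    (fun a b => hdist a b) (by simp)
  refine (Finset.sup_congr rfl (fun m _ => ?_)).trans this.symm
  show ((((Equiv.addLeft n) m) : ℤ) : WithBot ℤ) = ((fun b => (n : WithBot ℤ) + b) ∘ fun m : ℤ => (m : WithBot ℤ)) m
  simp [Equiv.addLeft]

lemma ldeg_add_eq_left' {f g : LaurentPolynomial K} (h : ldeg g < ldeg f) :
    ldeg (f + g) = ldeg f := supDegree_add_eq_left h

lemma ldeg_add_eq_right' {f g : LaurentPolynomial K} (h : ldeg f < ldeg g) :
    ldeg (f + g) = ldeg g := supDegree_add_eq_right h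

lemma ldeg_c1_mul {f : LaurentPolynomial K} (hf : f ≠ 0) :
    ldeg ((1 - T 1) * f) = 1 + ldeg f := by
  obtain ⟨m, hm⟩ := ldeg_exists hf
  have h1 : ldeg (T 1 * f : LaurentPolynomial K) = 1 + ldeg f := ldeg_T_mul 1 f
  have he : ((1 - T 1) * f : LaurentPolynomial K) = f + (-(T 1 * f)) := by ring
  rw [he, ldeg_add_eq_right']
  · rw [show ldeg (-(T 1 * f) : LaurentPolynomial K) = ldeg (T 1 * f) from supDegree_neg, h1]
  · rw [show ldeg (-(T 1 * f) : LaurentPolynomial K) = ldeg (T 1 * f) from supDegree_neg, h1, hm]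
    show (m : WithBot ℤ) < ((1 : ℤ) : WithBot ℤ) + (m : WithBot ℤ)
    rw [← WithBot.coe_add]
    exact_mod_cast by omega

lemma ldeg_c3_mul {f : LaurentPolynomial K} (hf : f ≠ 0) :
    ldeg ((T 2 - T 3) * f) = 3 + ldeg f := by
  obtain ⟨m, hm⟩ := ldeg_exists hf
  have h2 : ldeg (T 2 * f : LaurentPolynomial K) = 2 + ldeg f := ldeg_T_mul 2 f
  have h3 : ldeg (T 3 * f : LaurentPolynomial K) = 3 + ldeg f := ldeg_T_mul 3 f
  have he : ((T 2 - T 3) * f : LaurentPolynomial K) = T 2 * f + (-(T 3 * f)) := by ring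
  rw [he, ldeg_add_eq_right']
  · rw [show ldeg (-(T 3 * f) : LaurentPolynomial K) = ldeg (T 3 * f) from supDegree_neg, h3]
  · rw [show ldeg (-(T 3 * f) : LaurentPolynomial K) = ldeg (T 3 * f) from supDegree_neg, h2, h3, hm]
    show ((2 : ℤ) : WithBot ℤ) + (m : WithBot ℤ) < ((3 : ℤ) : WithBot ℤ) + (m : WithBot ℤ)
    rw [← WithBot.coe_add, ← WithBot.coe_add]
    exact_mod_cast by omega

open Matrix Pointwise

/-- nonzero vectors of length 2 -/
def V2 (K : Type) [Field K] : Type := {v : Fin 2 → LaurentPolynomial K // v ≠ 0}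

lemma gl_mulVec_ne_zero (g : GL (Fin 2) (LaurentPolynomial K))
    {v : Fin 2 → LaurentPolynomial K} (hv : v ≠ 0) : g.val.mulVec v ≠ 0 := by
  intro h
  apply hv
  have h1 : (g⁻¹).val.mulVec (g.val.mulVec v) = v := by
    rw [Matrix.mulVec_mulVec]
    have : (g⁻¹).val * g.val = 1 := by
      rw [← Units.val_mul, inv_mul_cancel]; rfl
    rw [this, Matrix.one_mulVec]
  rw [h, Matrix.mulVec_zero] at h1
  exact h1.symm

instance : MulAction (GL (Fin 2) (LaurentPolynomial K)) (V2 K) where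
  smul g v := ⟨g.val.mulVec v.val, gl_mulVec_ne_zero g v.2⟩
  one_smul v := by
    apply Subtype.ext
    show (1 : GL (Fin 2) (LaurentPolynomial K)).val.mulVec v.val = v.val
    rw [Units.val_one, Matrix.one_mulVec]
  mul_smul g h v := by
    apply Subtype.ext
    show (g * h).val.mulVec v.val = g.val.mulVec (h.val.mulVec v.val)
    rw [Units.val_mul, Matrix.mulVec_mulVec]

lemma smul_val (g : GL (Fin 2) (LaurentPolynomial K)) (v : V2 K) :
    (g • v).1 = g.val.mulVec v.1 := rfl


lemma T_mul_T (m n : ℤ) : (T m * T n : LaurentPolynomial K) = T (m + n) := (T_add m n).symm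

lemma e1K : (T 3 * T (-3) : LaurentPolynomial K) = 1 := by rw [← T_add]; norm_num

/-- the first generator, corner of `β((σ1σ2σ1)²)` -/
def a₀ : GL (Fin 2) (LaurentPolynomial K) where
  val := !![T 3, 1 - T 1; 0, 1]
  inv := !![T (-3), T (-3) * (T 1 - 1); 0, 1]
  val_inv := by
    rw [Matrix.mul_fin_two, Matrix.one_fin_two]
    refine Matrix.ext fun i j => ?_
    fin_cases i <;> fin_cases j <;>
      simp only [Matrix.cons_val', Matrix.cons_val_zero, Matrix.cons_val_one, Matrix.head_cons,
        Matrix.empty_val', Matrix.cons_val_fin_one, Matrix.head_fin_const, Matrix.of_apply,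
        Fin.mk_zero, Fin.mk_one] <;>
      first
        | linear_combination (e1K (K := K))
        | linear_combination (T 1 - 1) * (e1K (K := K))
        | linear_combination (T (-3) * (T 1 - 1)) * (e1K (K := K))
        | ring
  inv_val := by
    rw [Matrix.mul_fin_two, Matrix.one_fin_two]
    refine Matrix.ext fun i j => ?_
    fin_cases i <;> fin_cases j <;>
      simp only [Matrix.cons_val', Matrix.cons_val_zero, Matrix.cons_val_one, Matrix.head_cons,
        Matrix.empty_val', Matrix.cons_val_fin_one, Matrix.head_fin_const, Matrix.of_apply,
        Fin.mk_zero, Fin.mk_one] <;>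
      first
        | linear_combination (e1K (K := K))
        | linear_combination (T (-3)) * (e1K (K := K))
        | linear_combination (T 1 - 1) * (e1K (K := K))
        | ring

/-- the second generator, corner of `β((σ3σ2σ3)²)` -/
def a₁ : GL (Fin 2) (LaurentPolynomial K) where
  val := !![1, 0; T 2 - T 3, T 3]
  inv := !![1, 0; T (-3) * (T 3 - T 2), T (-3)]
  val_inv := by
    rw [Matrix.mul_fin_two, Matrix.one_fin_two]
    refine Matrix.ext fun i j => ?_
    fin_cases i <;> fin_cases j <;>
      simp only [Matrix.cons_val', Matrix.cons_val_zero, Matrix.cons_val_one, Matrix.head_cons,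
        Matrix.empty_val', Matrix.cons_val_fin_one, Matrix.head_fin_const, Matrix.of_apply,
        Fin.mk_zero, Fin.mk_one] <;>
      first
        | linear_combination (e1K (K := K))
        | linear_combination (T 3 - T 2) * (e1K (K := K))
        | linear_combination (T (-3) * (T 3 - T 2)) * (e1K (K := K))
        | ring
  inv_val := by
    rw [Matrix.mul_fin_two, Matrix.one_fin_two]
    refine Matrix.ext fun i j => ?_
    fin_cases i <;> fin_cases j <;>
      simp only [Matrix.cons_val', Matrix.cons_val_zero, Matrix.cons_val_one, Matrix.head_cons,
        Matrix.empty_val', Matrix.cons_val_fin_one, Matrix.head_fin_const, Matrix.of_apply,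
        Fin.mk_zero, Fin.mk_one] <;>
      first
        | linear_combination (e1K (K := K))
        | linear_combination (T 3 - T 2) * (e1K (K := K))
        | linear_combination (T (-3) * (T 3 - T 2)) * (e1K (K := K))
        | ring

lemma ldeg_T (n : ℤ) : ldeg (T n : LaurentPolynomial K) = n :=
  AddMonoidAlgebra.supDegree_single_ne_zero n one_ne_zero

lemma eq_zero_of_ldeg_bot {f : LaurentPolynomial K} (h : ldeg f = ⊥) : f = 0 := by
  by_contra hf; exact ldeg_ne_bot hf h

lemma mulVec2 (a b c d : LaurentPolynomial K) (v : Fin 2 → LaurentPolynomial K) :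
    (!![a, b; c, d]).mulVec v = ![a * v 0 + b * v 1, c * v 0 + d * v 1] := by
  funext i
  fin_cases i <;> simp [Matrix.mulVec, dotProduct, Fin.sum_univ_two]

/-- Ping-pong set: attractor of `a₀`. -/
def X0 : Set (V2 K) := {v | ldeg (v.1 1) + ((1 : ℤ) : WithBot ℤ) ≤ ldeg (v.1 0)}
/-- Ping-pong set: attractor of `a₀⁻¹`. -/
def Y0 : Set (V2 K) := {v | ldeg (v.1 0) + ((2 : ℤ) : WithBot ℤ) = ldeg (v.1 1)}
/-- Ping-pong set: attractor of `a₁`. -/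
def X1 : Set (V2 K) := {v | ldeg (v.1 0) + ((3 : ℤ) : WithBot ℤ) ≤ ldeg (v.1 1)}
/-- Ping-pong set: attractor of `a₁⁻¹`. -/
def Y1 : Set (V2 K) := {v | ldeg (v.1 0) = ldeg (v.1 1)}

lemma V2.ne (v : V2 K) : ¬(v.1 0 = 0 ∧ v.1 1 = 0) := by
  rintro ⟨h0, h1⟩
  apply v.2
  funext i
  fin_cases i
  · exact h0
  · exact h1

lemma pingA (v : V2 K) (hv : v ∉ Y0 (K := K)) : (a₀ (K := K) • v) ∈ X0 (K := K) := by
  have hval : (a₀ (K := K) • v).1 = ![T 3 * v.1 0 + (1 - T 1) * v.1 1,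
      0 * v.1 0 + 1 * v.1 1] := by
    rw [smul_val]
    show (!![(T 3 : LaurentPolynomial K), 1 - T 1; 0, 1]).mulVec v.1 = _
    rw [mulVec2]
  show ldeg ((a₀ (K := K) • v).1 1) + ((1 : ℤ) : WithBot ℤ) ≤ ldeg ((a₀ (K := K) • v).1 0)
  rw [hval]
  show ldeg (0 * v.1 0 + 1 * v.1 1) + _ ≤ ldeg (T 3 * v.1 0 + (1 - T 1) * v.1 1)
  rw [zero_mul, one_mul, zero_add]
  by_cases hg : v.1 1 = 0
  · rw [hg, ldeg_zero, WithBot.bot_add]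
    exact bot_le
  obtain ⟨m, hm⟩ := ldeg_exists hg
  have h1 : ldeg ((1 - T 1) * v.1 1) = ((1 + m : ℤ) : WithBot ℤ) := by
    rw [ldeg_c1_mul hg, hm]; push_cast; rfl
  by_cases hf : v.1 0 = 0
  · rw [hf, mul_zero, zero_add, h1, hm]
    rw [← WithBot.coe_add]
    exact_mod_cast by omega
  obtain ⟨n, hn⟩ := ldeg_exists hf
  have h3 : ldeg (T 3 * v.1 0) = ((3 + n : ℤ) : WithBot ℤ) := by
    rw [ldeg_T_mul, hn]; push_cast; rfl
  rcases lt_trichotomy (3 + n) (1 + m) with hlt | heq | hgt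
  · rw [ldeg_add_eq_right' (by rw [h1, h3]; exact_mod_cast hlt), h1, hm, ← WithBot.coe_add]
    exact_mod_cast by omega
  · refine absurd ?_ hv
    show ldeg (v.1 0) + ((2 : ℤ) : WithBot ℤ) = ldeg (v.1 1)
    rw [hn, hm, ← WithBot.coe_add]
    exact_mod_cast by omega
  · rw [ldeg_add_eq_left' (by rw [h1, h3]; exact_mod_cast hgt), h3, hm, ← WithBot.coe_add]
    exact_mod_cast by omega

lemma pingB (v : V2 K) (hv : v ∉ Y1 (K := K)) : (a₁ (K := K) • v) ∈ X1 (K := K) := by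
  have hval : (a₁ (K := K) • v).1 = ![1 * v.1 0 + 0 * v.1 1,
      (T 2 - T 3) * v.1 0 + T 3 * v.1 1] := by
    rw [smul_val]
    show (!![(1 : LaurentPolynomial K), 0; T 2 - T 3, T 3]).mulVec v.1 = _
    rw [mulVec2]
  show ldeg ((a₁ (K := K) • v).1 0) + ((3 : ℤ) : WithBot ℤ) ≤ ldeg ((a₁ (K := K) • v).1 1)
  rw [hval]
  show ldeg (1 * v.1 0 + 0 * v.1 1) + _ ≤ ldeg ((T 2 - T 3) * v.1 0 + T 3 * v.1 1)
  rw [zero_mul, one_mul, add_zero]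
  by_cases hf : v.1 0 = 0
  · rw [hf, ldeg_zero, WithBot.bot_add]
    exact bot_le
  obtain ⟨n, hn⟩ := ldeg_exists hf
  have h1 : ldeg ((T 2 - T 3) * v.1 0) = ((3 + n : ℤ) : WithBot ℤ) := by
    rw [ldeg_c3_mul hf, hn]; push_cast; rfl
  by_cases hg : v.1 1 = 0
  · rw [hg, mul_zero, add_zero, h1, hn, ← WithBot.coe_add]
    exact_mod_cast by omega
  obtain ⟨m, hm⟩ := ldeg_exists hg
  have h3 : ldeg (T 3 * v.1 1) = ((3 + m : ℤ) : WithBot ℤ) := by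
    rw [ldeg_T_mul, hm]; push_cast; rfl
  rcases lt_trichotomy (3 + n) (3 + m) with hlt | heq | hgt
  · rw [ldeg_add_eq_right' (by rw [h1, h3]; exact_mod_cast hlt), h3, hn, ← WithBot.coe_add]
    exact_mod_cast by omega
  · refine absurd ?_ hv
    show ldeg (v.1 0) = ldeg (v.1 1)
    rw [hn, hm]
    exact_mod_cast by omega
  · rw [ldeg_add_eq_left' (by rw [h1, h3]; exact_mod_cast hgt), h1, hn, ← WithBot.coe_add]
    exact_mod_cast by omega

lemma hY_of_hX {G α : Type*} [Group G] [MulAction G α] {g : G} {X Y : Set α}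
    (h : ∀ v ∉ Y, g • v ∈ X) : g⁻¹ • Xᶜ ⊆ Y := by
  rintro x ⟨y, hy, rfl⟩
  by_contra hxY
  exact hy (by simpa using h _ hxY)

lemma not_cab (m k : ℤ) : ¬((m : WithBot ℤ) + ((k : ℤ) : WithBot ℤ) ≤ ⊥) := by
  rw [← WithBot.coe_add]; exact WithBot.not_coe_le_bot _

lemma not_cabe (m k : ℤ) : ¬((m : WithBot ℤ) + ((k : ℤ) : WithBot ℤ) = ⊥) := by
  rw [← WithBot.coe_add]; exact WithBot.coe_ne_bot

/-- All four ping-pong sets are pairwise disjoint.  We record the six statements. -/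
lemma disjXY :
    Disjoint (X0 (K := K)) (X1 (K := K)) ∧ Disjoint (Y0 (K := K)) (Y1 (K := K)) ∧
    Disjoint (X0 (K := K)) (Y0 (K := K)) ∧ Disjoint (X0 (K := K)) (Y1 (K := K)) ∧
    Disjoint (X1 (K := K)) (Y0 (K := K)) ∧ Disjoint (X1 (K := K)) (Y1 (K := K)) := by
  refine ⟨?_, ?_, ?_, ?_, ?_, ?_⟩ <;>
  · rw [Set.disjoint_left]
    intro v h1 h2
    by_cases hf : v.1 0 = 0 <;> by_cases hg : v.1 1 = 0
    · exact V2.ne v ⟨hf, hg⟩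
    · obtain ⟨m, hm⟩ := ldeg_exists hg
      simp only [X0, X1, Y0, Y1, Set.mem_setOf_eq, hf, ldeg_zero, hm] at h1 h2
      first
        | exact not_cab m 1 h1
        | exact not_cab m 1 h2
        | exact WithBot.bot_ne_coe (by rwa [WithBot.bot_add] at h1)
        | exact WithBot.bot_ne_coe (by rwa [WithBot.bot_add] at h2)
        | exact WithBot.bot_ne_coe h1
        | exact WithBot.bot_ne_coe h2
    · obtain ⟨n, hn⟩ := ldeg_exists hf
      simp only [X0, X1, Y0, Y1, Set.mem_setOf_eq, hg, ldeg_zero, hn] at h1 h2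
      first
        | exact not_cab n 3 h1
        | exact not_cab n 3 h2
        | exact not_cabe n 2 h1
        | exact not_cabe n 2 h2
        | exact WithBot.coe_ne_bot h1
        | exact WithBot.coe_ne_bot h2
    · obtain ⟨n, hn⟩ := ldeg_exists hf
      obtain ⟨m, hm⟩ := ldeg_exists hg
      simp only [X0, X1, Y0, Y1, Set.mem_setOf_eq, hn, hm, ← WithBot.coe_add] at h1 h2
      first
        | (have g1 : (m + 1 : ℤ) ≤ n := by exact_mod_cast h1
           have g2 : (n + 3 : ℤ) ≤ m := by exact_mod_cast h2
           omega)
        | (have g1 : (n + 2 : ℤ) = m := by exact_mod_cast h1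
           have g2 : (n : ℤ) = m := by exact_mod_cast h2
           omega)
        | (have g1 : (m + 1 : ℤ) ≤ n := by exact_mod_cast h1
           have g2 : (n + 2 : ℤ) = m := by exact_mod_cast h2
           omega)
        | (have g1 : (m + 1 : ℤ) ≤ n := by exact_mod_cast h1
           have g2 : (n : ℤ) = m := by exact_mod_cast h2
           omega)
        | (have g1 : (n + 3 : ℤ) ≤ m := by exact_mod_cast h1
           have g2 : (n + 2 : ℤ) = m := by exact_mod_cast h2
           omega)
        | (have g1 : (n + 3 : ℤ) ≤ m := by exact_mod_cast h1
           have g2 : (n : ℤ) = m := by exact_mod_cast h2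
           omega)

lemma X0_nonempty : (X0 (K := K)).Nonempty := by
  refine ⟨⟨![T 1, 1], ?_⟩, ?_⟩
  · intro h
    have := congrFun h 1
    simp at this
  · show ldeg ((![T 1, 1] : Fin 2 → LaurentPolynomial K) 1) + _ ≤
      ldeg ((![T 1, 1] : Fin 2 → LaurentPolynomial K) 0)
    have h1 : (![T 1, (1 : LaurentPolynomial K)]) 1 = T 0 := by simp
    have h0 : (![T 1, (1 : LaurentPolynomial K)]) 0 = T 1 := by simp
    rw [h1, h0, ldeg_T, ldeg_T, ← WithBot.coe_add]
    exact_mod_cast by omega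

lemma X1_nonempty : (X1 (K := K)).Nonempty := by
  refine ⟨⟨![1, T 3], ?_⟩, ?_⟩
  · intro h
    have := congrFun h 0
    simp at this
  · show ldeg ((![1, T 3] : Fin 2 → LaurentPolynomial K) 0) + _ ≤
      ldeg ((![1, T 3] : Fin 2 → LaurentPolynomial K) 1)
    have h0 : (![(1 : LaurentPolynomial K), T 3]) 0 = T 0 := by simp
    have h1 : (![(1 : LaurentPolynomial K), T 3]) 1 = T 3 := by simp
    rw [h1, h0, ldeg_T, ldeg_T, ← WithBot.coe_add]
    exact_mod_cast by omega

/-- The two corner matrices generate a free group of rank 2. -/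
theorem freeGL2 :
    Function.Injective (FreeGroup.lift ![a₀ (K := K), a₁ (K := K)] :
      FreeGroup (Fin 2) →* GL (Fin 2) (LaurentPolynomial K)) := by
  obtain ⟨d1, d2, d3, d4, d5, d6⟩ := disjXY (K := K)
  apply FreeGroup.injective_lift_of_ping_pong (α := V2 K)
    (X := ![X0 (K := K), X1 (K := K)]) (Y := ![Y0 (K := K), Y1 (K := K)])
  · intro i
    fin_cases i
    · exact X0_nonempty
    · exact X1_nonempty
  · intro i j hij
    fin_cases i <;> fin_cases j <;> simp_all <;>
      first
        | exact d1
        | exact d1.symm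
  · intro i j hij
    fin_cases i <;> fin_cases j <;> simp_all <;>
      first
        | exact d2
        | exact d2.symm
  · intro i j
    fin_cases i <;> fin_cases j <;>
      first
        | exact d3
        | exact d4
        | exact d5
        | exact d6
  · intro i
    fin_cases i <;>
    · intro x hx
      obtain ⟨y, hy, rfl⟩ := hx
      first
        | exact pingA y (by simpa using hy)
        | exact pingB y (by simpa using hy)
  · intro i
    fin_cases i
    · show (![a₀ (K := K), a₁ (K := K)])⁻¹ 0 • (![X0 (K := K), X1 (K := K)] 0)ᶜ ⊆ _
      simp only [Pi.inv_apply, Matrix.cons_val_zero]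
      exact hY_of_hX (fun v hv => pingA v (by simpa using hv))
    · show (![a₀ (K := K), a₁ (K := K)])⁻¹ 1 • (![X0 (K := K), X1 (K := K)] 1)ᶜ ⊆ _
      simp only [Pi.inv_apply, Matrix.cons_val_one, Matrix.head_cons]
      exact hY_of_hX (fun v hv => pingB v (by simpa using hv))


/-- The (0,2)-corner of a 3×3 matrix. -/
def corner (M : Matrix (Fin 3) (Fin 3) (LaurentPolynomial K)) :
    Matrix (Fin 2) (Fin 2) (LaurentPolynomial K) :=
  !![M 0 0, M 0 2; M 2 0, M 2 2]

lemma corner_mul {M N : Matrix (Fin 3) (Fin 3) (LaurentPolynomial K)}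
    (hM0 : M 0 1 = 0) (hM2 : M 2 1 = 0) :
    corner (M * N) = corner M * corner N := by
  refine Matrix.ext fun i j => ?_
  fin_cases i <;> fin_cases j <;>
    simp [corner, Matrix.mul_apply, Fin.sum_univ_three, Fin.sum_univ_two, hM0, hM2]

lemma shape_mul {M N : Matrix (Fin 3) (Fin 3) (LaurentPolynomial K)}
    (hM0 : M 0 1 = 0) (hM2 : M 2 1 = 0) (hN0 : N 0 1 = 0) (hN2 : N 2 1 = 0) :
    (M * N) 0 1 = 0 ∧ (M * N) 2 1 = 0 := by
  constructor <;> simp [Matrix.mul_apply, Fin.sum_univ_three, hM0, hM2, hN0, hN2]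

lemma corner_one : corner (1 : Matrix (Fin 3) (Fin 3) (LaurentPolynomial K)) = 1 := by
  refine Matrix.ext fun i j => ?_
  fin_cases i <;> fin_cases j <;> simp [corner, Matrix.one_apply]

lemma inv_stuff (u : GL (Fin 3) (LaurentPolynomial K))
    (h0 : u.val 0 1 = 0) (h2 : u.val 2 1 = 0) (h1 : u.val 1 1 = T 3) :
    ((u⁻¹).val 0 1 = 0 ∧ (u⁻¹).val 2 1 = 0) ∧
      corner ((u⁻¹).val) * corner u.val = 1 ∧
      corner u.val * corner ((u⁻¹).val) = 1 := by
  have hmul : (u⁻¹).val * u.val = 1 := by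
    rw [← Units.val_mul, inv_mul_cancel, Units.val_one]
  have hmul' : u.val * (u⁻¹).val = 1 := by
    rw [← Units.val_mul, mul_inv_cancel, Units.val_one]
  have key : ∀ i : Fin 3, i ≠ 1 → (u⁻¹).val i 1 = 0 := by
    intro i hi
    have hc := congrFun (congrFun hmul i) 1
    rw [Matrix.mul_apply, Fin.sum_univ_three, h0, h2, h1] at hc
    rw [Matrix.one_apply_ne hi] at hc
    simp only [mul_zero, add_zero, zero_add, mul_one] at hc
    -- hc : (u⁻¹).val i 1 * T 3 = 0
    calc (u⁻¹).val i 1 = (u⁻¹).val i 1 * (T 3 * T (-3)) := by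
          rw [e1K, mul_one]
      _ = ((u⁻¹).val i 1 * T 3) * T (-3) := by ring
      _ = 0 := by rw [hc, zero_mul]
  have h01 := key 0 (by decide)
  have h21 := key 2 (by decide)
  refine ⟨⟨h01, h21⟩, ?_, ?_⟩
  · rw [← corner_mul h01 h21, hmul, corner_one]
  · rw [← corner_mul h0 h2, hmul', corner_one]

end Aux

set_option maxHeartbeats 1000000 in
/-- for every prime `p`, the matrices `β4rᵖ((σ1 σ2 σ1)²)` and
`β4rᵖ((σ3 σ2 σ3)²)` generate a free group of rank 2 in `GL(3, 𝔽p[t,t⁻¹])`: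
the homomorphism from the free group on two generators sending
`x ↦ β4rᵖ((σ1 σ2 σ1)²)`, `y ↦ β4rᵖ((σ3 σ2 σ3)²)` is injective. -/
theorem statement6 (p : ℕ) (hp : p.Prime)
    (β : B4 →* GL (Fin 3) (LaurentPolynomial (ZMod p)))
    (hβ : ∀ i, (β (σ i)).val = burau4r (ZMod p) i) :
    Function.Injective
      (FreeGroup.lift ![β ((σ 0 * σ 1 * σ 0) ^ 2), β ((σ 2 * σ 1 * σ 2) ^ 2)] :
        FreeGroup (Fin 2) →* GL (Fin 3) (LaurentPolynomial (ZMod p))) := by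
  haveI : Fact p.Prime := ⟨hp⟩
  have e2 : (T 2 : LaurentPolynomial (ZMod p)) = T 1 * T 1 := by
    rw [← T_add]; norm_num
  have e3 : (T 3 : LaurentPolynomial (ZMod p)) = T 1 * T 1 * T 1 := by
    rw [← T_add, ← T_add]; norm_num
  -- the explicit matrices of the two images
  have hA : (β ((σ 0 * σ 1 * σ 0) ^ 2)).val
      = !![T 3, 0, 1 - T 1; 0, T 3, 1 - T 2; 0, 0, 1] := by
    rw [_root_.map_pow, _root_.map_mul, _root_.map_mul, Units.val_pow_eq_pow_val, Units.val_mul, Units.val_mul,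
      hβ 0, hβ 1]
    have hb0 : burau4r (ZMod p) 0
        = !![-T 1, 1, 0; 0, 1, 0; 0, 0, 1] := rfl
    have hb1 : burau4r (ZMod p) 1
        = !![1, 0, 0; T 1, -T 1, 1; 0, 0, 1] := rfl
    rw [hb0, hb1]
    have s1 : (!![-T 1, 1, 0; 0, 1, 0; 0, 0, 1] * !![1, 0, 0; T 1, -T 1, 1; 0, 0, 1]
        : Matrix (Fin 3) (Fin 3) (LaurentPolynomial (ZMod p)))
        = !![0, -T 1, 1; T 1, -T 1, 1; 0, 0, 1] := by
      rw [Matrix.mul_fin_three]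
      refine Matrix.ext fun i j => ?_
      fin_cases i <;> fin_cases j <;>
        simp only [Matrix.cons_val', Matrix.cons_val_zero, Matrix.cons_val_one, Matrix.head_cons,
          Matrix.empty_val', Matrix.cons_val_fin_one, Matrix.head_fin_const, Matrix.of_apply,
          Matrix.cons_val_two, Matrix.tail_cons, Fin.mk_zero, Fin.mk_one] <;>
        (try simp only [e2, e3]) <;> ring
    have s2 : (!![0, -T 1, 1; T 1, -T 1, 1; 0, 0, 1] * !![-T 1, 1, 0; 0, 1, 0; 0, 0, 1]
        : Matrix (Fin 3) (Fin 3) (LaurentPolynomial (ZMod p)))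
        = !![0, -T 1, 1; -T 2, 0, 1; 0, 0, 1] := by
      rw [Matrix.mul_fin_three]
      refine Matrix.ext fun i j => ?_
      fin_cases i <;> fin_cases j <;>
        simp only [Matrix.cons_val', Matrix.cons_val_zero, Matrix.cons_val_one, Matrix.head_cons,
          Matrix.empty_val', Matrix.cons_val_fin_one, Matrix.head_fin_const, Matrix.of_apply,
          Matrix.cons_val_two, Matrix.tail_cons, Fin.mk_zero, Fin.mk_one] <;>
        (try simp only [e2, e3]) <;> ring
    have s3 : (!![0, -T 1, 1; -T 2, 0, 1; 0, 0, 1] * !![0, -T 1, 1; -T 2, 0, 1; 0, 0, 1]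
        : Matrix (Fin 3) (Fin 3) (LaurentPolynomial (ZMod p)))
        = !![T 3, 0, 1 - T 1; 0, T 3, 1 - T 2; 0, 0, 1] := by
      rw [Matrix.mul_fin_three]
      refine Matrix.ext fun i j => ?_
      fin_cases i <;> fin_cases j <;>
        simp only [Matrix.cons_val', Matrix.cons_val_zero, Matrix.cons_val_one, Matrix.head_cons,
          Matrix.empty_val', Matrix.cons_val_fin_one, Matrix.head_fin_const, Matrix.of_apply,
          Matrix.cons_val_two, Matrix.tail_cons, Fin.mk_zero, Fin.mk_one] <;>
        (try simp only [e2, e3]) <;> ring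
    rw [s1, s2, pow_two, s3]
  have hB : (β ((σ 2 * σ 1 * σ 2) ^ 2)).val
      = !![1, 0, 0; T 1 - T 3, T 3, 0; T 2 - T 3, 0, T 3] := by
    rw [_root_.map_pow, _root_.map_mul, _root_.map_mul, Units.val_pow_eq_pow_val, Units.val_mul, Units.val_mul,
      hβ 2, hβ 1]
    have hb2 : burau4r (ZMod p) 2
        = !![1, 0, 0; 0, 1, 0; 0, T 1, -T 1] := rfl
    have hb1 : burau4r (ZMod p) 1
        = !![1, 0, 0; T 1, -T 1, 1; 0, 0, 1] := rfl
    rw [hb2, hb1]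
    have s1 : (!![1, 0, 0; 0, 1, 0; 0, T 1, -T 1] * !![1, 0, 0; T 1, -T 1, 1; 0, 0, 1]
        : Matrix (Fin 3) (Fin 3) (LaurentPolynomial (ZMod p)))
        = !![1, 0, 0; T 1, -T 1, 1; T 2, -T 2, 0] := by
      rw [Matrix.mul_fin_three]
      refine Matrix.ext fun i j => ?_
      fin_cases i <;> fin_cases j <;>
        simp only [Matrix.cons_val', Matrix.cons_val_zero, Matrix.cons_val_one, Matrix.head_cons,
          Matrix.empty_val', Matrix.cons_val_fin_one, Matrix.head_fin_const, Matrix.of_apply,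
          Matrix.cons_val_two, Matrix.tail_cons, Fin.mk_zero, Fin.mk_one] <;>
        (try simp only [e2, e3]) <;> ring
    have s2 : (!![1, 0, 0; T 1, -T 1, 1; T 2, -T 2, 0] * !![1, 0, 0; 0, 1, 0; 0, T 1, -T 1]
        : Matrix (Fin 3) (Fin 3) (LaurentPolynomial (ZMod p)))
        = !![1, 0, 0; T 1, 0, -T 1; T 2, -T 2, 0] := by
      rw [Matrix.mul_fin_three]
      refine Matrix.ext fun i j => ?_
      fin_cases i <;> fin_cases j <;>
        simp only [Matrix.cons_val', Matrix.cons_val_zero, Matrix.cons_val_one, Matrix.head_cons,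
          Matrix.empty_val', Matrix.cons_val_fin_one, Matrix.head_fin_const, Matrix.of_apply,
          Matrix.cons_val_two, Matrix.tail_cons, Fin.mk_zero, Fin.mk_one] <;>
        (try simp only [e2, e3]) <;> ring
    have s3 : (!![1, 0, 0; T 1, 0, -T 1; T 2, -T 2, 0] * !![1, 0, 0; T 1, 0, -T 1; T 2, -T 2, 0]
        : Matrix (Fin 3) (Fin 3) (LaurentPolynomial (ZMod p)))
        = !![1, 0, 0; T 1 - T 3, T 3, 0; T 2 - T 3, 0, T 3] := by
      rw [Matrix.mul_fin_three]
      refine Matrix.ext fun i j => ?_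
      fin_cases i <;> fin_cases j <;>
        simp only [Matrix.cons_val', Matrix.cons_val_zero, Matrix.cons_val_one, Matrix.head_cons,
          Matrix.empty_val', Matrix.cons_val_fin_one, Matrix.head_fin_const, Matrix.of_apply,
          Matrix.cons_val_two, Matrix.tail_cons, Fin.mk_zero, Fin.mk_one] <;>
        (try simp only [e2, e3]) <;> ring
    rw [s1, s2, pow_two, s3]
  -- transfer along the corner map to `GL(2)`
  set ψ : FreeGroup (Fin 2) →* GL (Fin 2) (LaurentPolynomial (ZMod p)) :=
    FreeGroup.lift ![a₀ (K := ZMod p), a₁ (K := ZMod p)] with hψ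
  set fh : FreeGroup (Fin 2) →* GL (Fin 3) (LaurentPolynomial (ZMod p)) :=
    FreeGroup.lift ![β ((σ 0 * σ 1 * σ 0) ^ 2), β ((σ 2 * σ 1 * σ 2) ^ 2)] with hfh
  have hfh0 : fh (pure (0 : Fin 2)) = β ((σ 0 * σ 1 * σ 0) ^ 2) := by
    show fh (FreeGroup.of 0) = _
    rw [hfh, FreeGroup.lift_apply_of]; rfl
  have hfh1 : fh (pure (1 : Fin 2)) = β ((σ 2 * σ 1 * σ 2) ^ 2) := by
    show fh (FreeGroup.of 1) = _
    rw [hfh, FreeGroup.lift_apply_of]; rfl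
  have hψ0 : ψ (pure (0 : Fin 2)) = a₀ (K := ZMod p) := by
    show ψ (FreeGroup.of 0) = _
    rw [hψ, FreeGroup.lift_apply_of]; rfl
  have hψ1 : ψ (pure (1 : Fin 2)) = a₁ (K := ZMod p) := by
    show ψ (FreeGroup.of 1) = _
    rw [hψ, FreeGroup.lift_apply_of]; rfl
  have key : ∀ w : FreeGroup (Fin 2),
      ((fh w).val 0 1 = 0 ∧ (fh w).val 2 1 = 0) ∧ corner ((fh w).val) = (ψ w).val := by
    intro w
    induction w using FreeGroup.induction_on with
    | C1 =>
      rw [_root_.map_one, _root_.map_one, Units.val_one, Units.val_one, corner_one]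
      refine ⟨⟨?_, ?_⟩, rfl⟩ <;> exact Matrix.one_apply_ne (by decide)
    | of x =>
      fin_cases x
      · show ((fh (pure (0 : Fin 2))).val 0 1 = 0 ∧ (fh (pure (0 : Fin 2))).val 2 1 = 0) ∧
          corner ((fh (pure (0 : Fin 2))).val) = (ψ (pure (0 : Fin 2))).val
        rw [hfh0, hψ0, hA]
        refine ⟨⟨by simp, by simp⟩, ?_⟩
        show corner _ = !![T 3, 1 - T 1; 0, 1]
        refine Matrix.ext fun i j => ?_
        fin_cases i <;> fin_cases j <;> simp [corner, Matrix.vecHead, Matrix.vecTail]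
      · show ((fh (pure (1 : Fin 2))).val 0 1 = 0 ∧ (fh (pure (1 : Fin 2))).val 2 1 = 0) ∧
          corner ((fh (pure (1 : Fin 2))).val) = (ψ (pure (1 : Fin 2))).val
        rw [hfh1, hψ1, hB]
        refine ⟨⟨by simp, by simp⟩, ?_⟩
        show corner _ = !![1, 0; T 2 - T 3, T 3]
        refine Matrix.ext fun i j => ?_
        fin_cases i <;> fin_cases j <;> simp [corner, Matrix.vecHead, Matrix.vecTail]
    | inv_of x ih =>
      obtain ⟨⟨j0, j2⟩, jc⟩ := ih
      have h11 : (fh (pure x)).val 1 1 = T 3 := by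
        fin_cases x
        · show (fh (pure (0 : Fin 2))).val 1 1 = T 3
          rw [hfh0, hA]; simp
        · show (fh (pure (1 : Fin 2))).val 1 1 = T 3
          rw [hfh1, hB]; simp
      obtain ⟨⟨i0, i2⟩, ic1, ic2⟩ := inv_stuff (fh (pure x)) j0 j2 h11
      rw [_root_.map_inv, _root_.map_inv]
      refine ⟨⟨i0, i2⟩, ?_⟩
      have r1 : corner (((fh (pure x))⁻¹).val) * (ψ (pure x)).val = 1 := by
        have jc' : corner (fh (pure x)).val = (ψ (pure x)).val := jc
        rw [← jc']; exact ic1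
      have r2 : (ψ (pure x)).val * ((ψ (pure x))⁻¹).val = 1 := by
        rw [← Units.val_mul, mul_inv_cancel, Units.val_one]
      exact left_inv_eq_right_inv r1 r2
    | mul x y ihx ihy =>
      obtain ⟨⟨x0, x2⟩, xc⟩ := ihx
      obtain ⟨⟨y0, y2⟩, yc⟩ := ihy
      rw [_root_.map_mul, _root_.map_mul, Units.val_mul, Units.val_mul]
      exact ⟨shape_mul x0 x2 y0 y2, by rw [corner_mul x0 x2, xc, yc]⟩
  rw [injective_iff_map_eq_one]
  intro w hw
  have h2 := (key w).2
  rw [hw, Units.val_one, corner_one] at h2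
  have hψw : ψ w = 1 := Units.ext h2.symm
  exact (injective_iff_map_eq_one ψ).mp (freeGL2 (K := ZMod p)) w hψw
end
end

section
/- For every infinite cardinal κ, there exists a linearly ordered field E such that every nonnegative element of E has a square root in E (i.e. E is a Euclidean field) and the cardinality of E is κ. -/
set_option maxHeartbeats 1000000

universe u

open Cardinal Filter Filter.Germ

noncomputable instance : IsStrictOrderedRing (ULift.{u} ℝ) :=
  Function.Injective.isStrictOrderedRing ULift.down rfl rfl (fun _ _ => rfl) (fun _ _ => rfl)
    Iff.rfl Iff.rfl

private noncomputable def tower {G : Type u} [Field G] (sq : G → G) (s : Set G) :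
    ℕ → Subfield G
  | 0 => Subfield.closure s
  | n + 1 => Subfield.closure ((tower sq s n : Set G) ∪ sq '' (tower sq s n : Set G))

/-- Inside a big Euclidean field, find a Euclidean subfield of prescribed cardinality. -/
lemma exists_euclidean_subfield (G : Type u) [Field G] [LinearOrder G] [IsStrictOrderedRing G]
    (hsq : ∀ x : G, 0 ≤ x → ∃ y : G, y ^ 2 = x)
    (κ : Cardinal.{u}) (hκ : Cardinal.aleph0 ≤ κ) (hle : κ ≤ #G) :
    ∃ (E : Type u) (_ : Field E) (_ : LinearOrder E) (_ : IsStrictOrderedRing E),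
      (∀ x : E, 0 ≤ x → ∃ y : E, y ^ 2 = x) ∧ #E = κ := by
  classical
  obtain ⟨s, hs⟩ := Cardinal.le_mk_iff_exists_set.mp hle
  set sq : G → G := fun x => if h : 0 ≤ x then (hsq x h).choose else 0 with hsqdef
  have sq_spec : ∀ x : G, 0 ≤ x → (sq x) ^ 2 = x := by
    intro x hx
    simp only [hsqdef, dif_pos hx]
    exact (hsq x hx).choose_spec
  set F : ℕ → Subfield G := tower sq s with hFdef
  have hF0 : F 0 = Subfield.closure s := rfl
  have hFsucc : ∀ n, F (n + 1) = Subfield.closure ((F n : Set G) ∪ sq '' (F n : Set G)) :=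
    fun n => by rw [hFdef, tower]
  have hmono : Monotone F := monotone_nat_of_le_succ fun n => by
    rw [hFsucc]
    exact fun x hx => Subfield.subset_closure (Or.inl hx)
  have hdir : Directed (· ≤ ·) F := hmono.directed_le
  have hcard : ∀ n, #(F n) ≤ κ := by
    intro n
    induction n with
    | zero =>
      rw [hF0]
      refine (Subfield.cardinalMk_closure_le_max s).trans ?_
      rw [hs]
      exact max_le le_rfl hκ
    | succ n ih =>
      rw [hFsucc]
      refine (Subfield.cardinalMk_closure_le_max _).trans (max_le ?_ hκ)
      refine (Cardinal.mk_union_le _ _).trans ?_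
      calc #(F n : Set G) + #(sq '' (F n : Set G)) ≤ κ + κ :=
            add_le_add ih ((Cardinal.mk_image_le).trans ih)
        _ = κ := Cardinal.add_eq_self hκ
  set E' : Subfield G := ⨆ n, F n with hE'
  have hmem : ∀ x : G, x ∈ E' ↔ ∃ n, x ∈ F n := fun x => Subfield.mem_iSup_of_directed hdir
  refine ⟨E', inferInstance, inferInstance, inferInstance, ?_, ?_⟩
  · intro x hx
    have hx' : (0 : G) ≤ (x : G) := by exact_mod_cast hx
    obtain ⟨n, hn⟩ := (hmem (x : G)).mp x.2
    have hmem2 : sq (x : G) ∈ F (n + 1) := by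
      rw [hFsucc]
      exact Subfield.subset_closure (Or.inr ⟨(x : G), hn, rfl⟩)
    refine ⟨⟨sq (x : G), (hmem _).mpr ⟨n + 1, hmem2⟩⟩, ?_⟩
    apply Subtype.ext
    push_cast
    exact sq_spec _ hx'
  · apply le_antisymm
    · have hcoe : (E' : Set G) = ⋃ n, (F n : Set G) := Subfield.coe_iSup_of_directed hdir
      have heq : #E' = #(⋃ n, (F n : Set G)) := Cardinal.mk_congr (Equiv.setCongr hcoe)
      rw [heq]
      have hUnion : (⋃ n : ℕ, (F n : Set G)) = ⋃ n : ULift.{u} ℕ, (F n.down : Set G) := by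
        ext x; simp [ULift.exists]
      rw [hUnion]
      refine (Cardinal.mk_iUnion_le _).trans ?_
      have h1 : #(ULift.{u} ℕ) = ℵ₀ := Cardinal.mk_uLift ℕ ▸ by simp
      have h2 : (⨆ n : ULift.{u} ℕ, #(F n.down : Set G)) ≤ κ := ciSup_le' fun n => hcard n.down
      calc #(ULift.{u} ℕ) * ⨆ n : ULift.{u} ℕ, #(F n.down : Set G) ≤ ℵ₀ * κ := by
            rw [h1]; exact mul_le_mul_right h2 _
        _ = κ := by rw [Cardinal.mul_eq_max le_rfl hκ, max_eq_right hκ]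
    · rw [← hs]
      apply Cardinal.mk_le_mk_of_subset
      intro x hx
      exact (hmem x).mpr ⟨0, hF0 ▸ Subfield.subset_closure hx⟩

lemma exists_big_euclidean (κ : Cardinal.{u}) (hκ : Cardinal.aleph0 ≤ κ) :
    ∃ (G : Type u) (_ : Field G) (_ : LinearOrder G) (_ : IsStrictOrderedRing G),
      (∀ x : G, 0 ≤ x → ∃ y : G, y ^ 2 = x) ∧ κ ≤ #G := by
  classical
  let α := (Cardinal.ord κ).ToType
  haveI : Nonempty α := by
    rw [← not_isEmpty_iff, Ordinal.toType_empty_iff_eq_zero, Cardinal.ord_eq_zero]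
    intro h
    rw [h] at hκ
    simp at hκ
    exact Cardinal.aleph0_ne_zero hκ
  let U : Ultrafilter (Finset α) := Ultrafilter.of atTop
  have hU : ∀ {S : Set (Finset α)}, S ∈ (atTop : Filter (Finset α)) → S ∈ (U : Filter (Finset α)) :=
    fun hS => Ultrafilter.of_le atTop hS
  refine ⟨Germ (U : Filter (Finset α)) (ULift.{u} ℝ), inferInstance, inferInstance, inferInstance, ?_, ?_⟩
  · intro x hx
    induction x using Germ.inductionOn with
    | _ f =>
      rw [Germ.coe_nonneg] at hx
      refine ⟨(↑(fun s => ULift.up (Real.sqrt (f s).down) : Finset α → ULift.{u} ℝ) :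
        Germ (U : Filter (Finset α)) (ULift.{u} ℝ)), ?_⟩
      rw [← Germ.coe_pow, Germ.coe_eq]
      filter_upwards [hx] with s hs
      apply ULift.ext
      show (Real.sqrt (f s).down) ^ 2 = (f s).down
      rw [Real.sq_sqrt]
      exact_mod_cast hs
  · -- injection from α into the germs
    have hinj : Function.Injective (fun a : α =>
        (↑(fun s : Finset α => ULift.up ((s.filter (· < a)).card : ℝ)) :
          Germ (U : Filter (Finset α)) (ULift.{u} ℝ))) := by
      intro a b hab
      by_contra hne
      rw [Germ.coe_eq] at hab
      have hIci : {s : Finset α | {a, b} ≤ s} ∈ (U : Filter (Finset α)) :=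
        hU (Filter.mem_atTop ({a, b} : Finset α))
      have := hab.and (Filter.eventually_iff.mpr hIci)
      obtain ⟨s, h1, h2⟩ := this.exists
      have ha : a ∈ s := h2 (by simp)
      have hb : b ∈ s := h2 (by simp)
      have hcardeq : (s.filter (· < a)).card = (s.filter (· < b)).card := by
        have h3 := congrArg ULift.down h1
        simp only at h3
        exact_mod_cast h3
      rcases lt_or_gt_of_ne hne with h | h
      · have : (s.filter (· < a)).card < (s.filter (· < b)).card := by
          apply Finset.card_lt_card
          constructor
          · intro x hx
            simp only [Finset.mem_filter] at *
            exact ⟨hx.1, hx.2.trans h⟩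
          · intro hsub
            have : a ∈ s.filter (· < a) := hsub (by simp [ha, h])
            simp at this
        omega
      · have : (s.filter (· < b)).card < (s.filter (· < a)).card := by
          apply Finset.card_lt_card
          constructor
          · intro x hx
            simp only [Finset.mem_filter] at *
            exact ⟨hx.1, hx.2.trans h⟩
          · intro hsub
            have : b ∈ s.filter (· < b) := hsub (by simp [hb, h])
            simp at this
        omega
    have := Cardinal.mk_le_of_injective hinj
    rwa [Cardinal.mk_toType, Cardinal.card_ord] at this

/-- for every infinite cardinal `κ` there exists a Euclidean field
(a linearly ordered field in which every nonnegative element is a square)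
of cardinality `κ`. -/
theorem statement18 (κ : Cardinal.{u}) (hκ : Cardinal.aleph0 ≤ κ) :
    ∃ (E : Type u) (_ : Field E) (_ : LinearOrder E) (_ : IsStrictOrderedRing E),
      (∀ x : E, 0 ≤ x → ∃ y : E, y ^ 2 = x) ∧ Cardinal.mk E = κ := by
  obtain ⟨G, _, _, _, hsq, hle⟩ := exists_big_euclidean κ hκ
  exact exists_euclidean_subfield G hsq κ hκ hle
end

section
/- Let f2, f3 ∈ ℤ[t,t⁻¹] be Laurent polynomials satisfying f2·bar(f2) + (t⁻¹ + 1 + t)·f3·bar(f3) = 0, where bar is the ring automorphism of ℤ[t,t⁻¹] determined by t ↦ t⁻¹. Then f2 = 0 and f3 = 0. -/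
open LaurentPolynomial Complex

noncomputable def ev (z : ℂˣ) : LaurentPolynomial ℤ →+* ℂ :=
  ((AddMonoidAlgebra.lift ℤ ℂ ℤ ((Units.coeHom ℂ).comp (zpowersHom ℂˣ z)))).toRingHom

lemma ev_single (z : ℂˣ) (n : ℤ) (a : ℤ) : ev z (C a * T n) = a * (z:ℂ)^n := by
  rw [← single_eq_C_mul_T]
  show (AddMonoidAlgebra.lift ℤ ℂ ℤ ((Units.coeHom ℂ).comp (zpowersHom ℂˣ z))) (AddMonoidAlgebra.single n a) = _
  rw [AddMonoidAlgebra.lift_single]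
  simp

lemma ev_toLaurent (z : ℂˣ) (p : Polynomial ℤ) :
    ev z (p.toLaurent) = Polynomial.eval₂ (Int.castRingHom ℂ) z p := by
  have : (ev z).comp Polynomial.toLaurent = Polynomial.eval₂RingHom (Int.castRingHom ℂ) (z:ℂ) := by
    apply Polynomial.ringHom_ext
    · intro a
      have := ev_single z 0 a
      simpa using this
    · have := ev_single z 1 1
      simpa using this
  exact DFunLike.congr_fun this p

lemma ev_eq_zero_of_inf (f : LaurentPolynomial ℤ)
    (h : {z : ℂˣ | ev z f = 0}.Infinite) : f = 0 := by
  obtain ⟨n, p, hp⟩ := f.exists_T_pow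
  have hpz : p.map (Int.castRingHom ℂ) = 0 := by
    by_contra hne
    have hfin : {z : ℂ | (p.map (Int.castRingHom ℂ)).IsRoot z}.Finite :=
      Polynomial.finite_setOf_isRoot hne
    have : {z : ℂˣ | ev z f = 0}.Finite := by
      apply Set.Finite.of_finite_image (f := (Units.val : ℂˣ → ℂ)) ?_ (Units.val_injective.injOn)
      refine hfin.subset ?_
      rintro w ⟨z, hz, rfl⟩
      have : ev z (p.toLaurent) = 0 := by
        rw [hp, map_mul, hz, zero_mul]
      rw [ev_toLaurent] at this
      simpa [Polynomial.IsRoot, Polynomial.eval_map] using this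
    exact h this
  have hp0 : p = 0 := by
    have hinj : Function.Injective (Polynomial.map (Int.castRingHom ℂ)) :=
      Polynomial.map_injective _ (fun a b hab => Int.cast_injective (α := ℂ) (by simpa using hab))
    simpa using hinj (by simpa using hpz)
  have h0 : f * T (n:ℤ) = 0 := by rw [← hp, hp0]; simp
  have hT : IsUnit (T (n:ℤ) : LaurentPolynomial ℤ) := isUnit_T _
  exact hT.mul_left_eq_zero.mp h0

lemma bar_T_neg_one (bar : LaurentPolynomial ℤ →+* LaurentPolynomial ℤ)
    (hbar : bar (T 1) = T (-1)) : bar (T (-1)) = T 1 := by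
  have h1 : (T 1 * T (-1) : LaurentPolynomial ℤ) = 1 := by
    rw [← T_add]; norm_num
  have h2 : T (-1) * bar (T (-1)) = 1 := by
    have h3 := congrArg bar h1
    rw [map_mul, map_one, hbar] at h3
    exact h3
  calc bar (T (-1)) = (T 1 * T (-1)) * bar (T (-1)) := by rw [h1, one_mul]
    _ = T 1 * (T (-1) * bar (T (-1))) := by ring
    _ = T 1 := by rw [h2, mul_one]

lemma bar_T (bar : LaurentPolynomial ℤ →+* LaurentPolynomial ℤ)
    (hbar : bar (T 1) = T (-1)) (n : ℤ) : bar (T n) = T (-n) := by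
  induction n using Int.induction_on with
  | zero => simpa using map_one bar
  | succ k ih =>
      have h : (T (k+1) : LaurentPolynomial ℤ) = T k * T 1 := by rw [← T_add]
      rw [h, map_mul, ih, hbar, ← T_add]; ring_nf
  | pred k ih =>
      have h : (T (-k-1) : LaurentPolynomial ℤ) = T (-k) * T (-1) := by rw [← T_add]; ring_nf
      rw [h, map_mul, ih, bar_T_neg_one bar hbar, ← T_add]; ring_nf

lemma bar_C_mul_T (bar : LaurentPolynomial ℤ →+* LaurentPolynomial ℤ)
    (hbar : bar (T 1) = T (-1)) (n : ℤ) (a : ℤ) : bar (C a * T n) = C a * T (-n) := by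
  have hC : (C a : LaurentPolynomial ℤ) = (a : LaurentPolynomial ℤ) := eq_intCast C a
  rw [map_mul, hC, map_intCast, bar_T bar hbar n]

lemma ev_bar (bar : LaurentPolynomial ℤ →+* LaurentPolynomial ℤ)
    (hbar : bar (T 1) = T (-1)) (z : ℂˣ) (hz : (starRingEnd ℂ) (z:ℂ) = (z:ℂ)⁻¹)
    (f : LaurentPolynomial ℤ) : ev z (bar f) = (starRingEnd ℂ) (ev z f) := by
  induction f using LaurentPolynomial.induction_on' with
  | add p q hp hq =>
      rw [map_add, map_add, map_add, hp, hq]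
      exact (map_add (starRingEnd ℂ) _ _).symm
  | C_mul_T n a =>
      rw [bar_C_mul_T bar hbar, ev_single, ev_single, map_mul, map_zpow₀, hz]
      rw [inv_zpow, ← zpow_neg]
      simp

/-- if `f2, f3 ∈ ℤ[t,t⁻¹]` satisfy
`f2·bar(f2) + (t⁻¹ + 1 + t)·f3·bar(f3) = 0`, where `bar` is the ring automorphism
of `ℤ[t,t⁻¹]` determined by `t ↦ t⁻¹`, then `f2 = 0` and `f3 = 0`. -/
theorem statement19
    (bar : LaurentPolynomial ℤ →+* LaurentPolynomial ℤ) (hbar : bar (T 1) = T (-1))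
    (f2 f3 : LaurentPolynomial ℤ)
    (h : f2 * bar f2 + (T (-1) + 1 + T 1) * (f3 * bar f3) = 0) :
    f2 = 0 ∧ f3 = 0 := by
  set u : ℝ → ℂˣ := fun θ => Units.mk0 (Complex.exp (θ * I)) (Complex.exp_ne_zero _) with hu
  have hconj : ∀ θ : ℝ, (starRingEnd ℂ) ((u θ : ℂ)) = ((u θ : ℂ))⁻¹ := by
    intro θ
    rw [hu]
    simp only [Units.val_mk0]
    rw [← Complex.exp_conj, ← Complex.exp_neg]
    congr 1
    simp [Complex.conj_I]
  -- key vanishing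
  have key : ∀ θ ∈ Set.Ioo (0:ℝ) 1, ev (u θ) f2 = 0 ∧ ev (u θ) f3 = 0 := by
    intro θ hθ
    have h0 := congrArg (ev (u θ)) h
    rw [map_add, map_mul, map_mul, map_mul, map_add, map_add, map_one, map_zero] at h0
    rw [ev_bar bar hbar _ (hconj θ), ev_bar bar hbar _ (hconj θ)] at h0
    have hT1 : ev (u θ) (T 1) = (u θ : ℂ) := by
      have := ev_single (u θ) 1 1; simpa using this
    have hTm1 : ev (u θ) (T (-1)) = (starRingEnd ℂ) ((u θ : ℂ)) := by
      have h5 := ev_single (u θ) (-1) 1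
      simp only [map_one, one_mul] at h5
      rw [h5, hconj θ]
      simp
    rw [hT1, hTm1] at h0
    set a := ev (u θ) f2
    set b := ev (u θ) f3
    have hre : (u θ : ℂ) + (starRingEnd ℂ) ((u θ : ℂ)) = (2 * Real.cos θ : ℝ) := by
      rw [Complex.add_conj]
      congr 1
      rw [hu]
      simp [Complex.exp_ofReal_mul_I_re]
    have hmid : ((starRingEnd ℂ) ((u θ : ℂ)) + 1 + (u θ : ℂ)) = ((2 * Real.cos θ + 1 : ℝ) : ℂ) := by
      rw [Complex.ofReal_add, Complex.ofReal_one, ← hre]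
      ring
    rw [hmid, Complex.mul_conj, Complex.mul_conj] at h0
    have h2 : Complex.normSq a + (2 * Real.cos θ + 1) * Complex.normSq b = 0 := by
      exact_mod_cast h0
    have hcos : 0 < Real.cos θ := by
      apply Real.cos_pos_of_mem_Ioo
      constructor
      · linarith [hθ.1, Real.pi_gt_three]
      · linarith [hθ.2, Real.pi_gt_three]
    have hb : Complex.normSq b = 0 := by
      nlinarith [Complex.normSq_nonneg a, Complex.normSq_nonneg b]
    have ha : Complex.normSq a = 0 := by nlinarith [Complex.normSq_nonneg b]
    exact ⟨Complex.normSq_eq_zero.mp ha, Complex.normSq_eq_zero.mp hb⟩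
  -- injectivity of θ ↦ u θ on Ioo 0 1
  have hinj : Set.InjOn u (Set.Ioo (0:ℝ) 1) := by
    intro x hx y hy hxy
    have hxy' : Complex.exp (x * I) = Complex.exp (y * I) := by
      have := congrArg (Units.val) hxy
      simpa [hu] using this
    rw [Complex.exp_eq_exp_iff_exists_int] at hxy'
    obtain ⟨k, hk⟩ := hxy'
    have him := congrArg Complex.im hk
    simp at him
    -- him : x = y + k * (2 * π) roughly
    have hk0 : k = 0 := by
      by_contra hk0
      have h1le : (1:ℝ) ≤ |(k:ℝ)| := by
        exact_mod_cast Int.one_le_abs (by exact_mod_cast hk0)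
      rcases abs_cases (k:ℝ) with ⟨he, _⟩ | ⟨he, _⟩ <;>
        nlinarith [Real.pi_gt_three, hx.1, hx.2, hy.1, hy.2]
    rw [hk0] at him
    simp at him
    linarith [him]
  have hinf2 : {z : ℂˣ | ev z f2 = 0}.Infinite := by
    apply Set.Infinite.mono (s := u '' (Set.Ioo 0 1))
    · rintro w ⟨θ, hθ, rfl⟩
      exact (key θ hθ).1
    · exact (Set.Ioo_infinite (by norm_num : (0:ℝ) < 1)).image hinj
  have hinf3 : {z : ℂˣ | ev z f3 = 0}.Infinite := by
    apply Set.Infinite.mono (s := u '' (Set.Ioo 0 1))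
    · rintro w ⟨θ, hθ, rfl⟩
      exact (key θ hθ).2
    · exact (Set.Ioo_infinite (by norm_num : (0:ℝ) < 1)).image hinj
  exact ⟨ev_eq_zero_of_inf f2 hinf2, ev_eq_zero_of_inf f3 hinf3⟩
end
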